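/- For all n×n strictly upper triangular rational matrices x and y, the product x·y satisfies x·y − y·x = xy − yx (the left symmetric product is compatible with the Lie bracket). -/

import Mathlib

section LeftSymmetric

variable {n : ℕ}

/-- The `i`-th superdiagonal component of a square matrix: the matrix whose `(k,l)` entry is
`x k l` if `l = k + i` and `0` otherwise. -/
def superdiag (x : Matrix (Fin n) (Fin n) ℚ) (i : ℕ) : Matrix (Fin n) (Fin n) ℚ :=
  Matrix.of fun k l => if (l : ℕ) = (k : ℕ) + i then x k l else 0

/-- A square matrix is strictly upper triangular if all entries on and below the main
diagonal vanish. -/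
def StrictlyUpperTriangular (x : Matrix (Fin n) (Fin n) ℚ) : Prop :=
  ∀ k l : Fin n, (l : ℕ) ≤ (k : ℕ) → x k l = 0

/-- The left symmetric product associated to the grading of the strictly upper triangular
matrices by superdiagonals:
`x · y = ∑_{i=1}^{n-1} ∑_{j=1}^{n-1} (j/(i+j)) (x⁽ⁱ⁾ y⁽ʲ⁾ - y⁽ʲ⁾ x⁽ⁱ⁾)`. -/
def lsMul (x y : Matrix (Fin n) (Fin n) ℚ) : Matrix (Fin n) (Fin n) ℚ :=
  ∑ i ∈ Finset.Icc 1 (n - 1), ∑ j ∈ Finset.Icc 1 (n - 1),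
    ((j : ℚ) / ((i : ℚ) + (j : ℚ))) •
      (superdiag x i * superdiag y j - superdiag y j * superdiag x i)

end LeftSymmetric

/-- The left symmetric product on strictly upper triangular rational
matrices is compatible with the Lie bracket: `x·y − y·x = xy − yx`. -/
lemma sum_superdiag {n : ℕ} (x : Matrix (Fin n) (Fin n) ℚ)
    (hx : StrictlyUpperTriangular x) :
    ∑ i ∈ Finset.Icc 1 (n - 1), superdiag x i = x := by
  ext k l
  rw [Matrix.sum_apply]
  simp only [Finset.sum_apply, superdiag, Matrix.of_apply]
  by_cases h : (k : ℕ) < (l : ℕ)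
  · rw [Finset.sum_eq_single ((l : ℕ) - (k : ℕ))]
    · rw [if_pos (by omega)]
    · intro b _ hb; rw [if_neg (by omega)]
    · intro hmem
      exfalso
      apply hmem
      rw [Finset.mem_Icc]
      have := l.isLt
      omega
  · rw [hx k l (by omega)]
    apply Finset.sum_eq_zero
    intro i hi
    rw [Finset.mem_Icc] at hi
    rw [if_neg (by omega)]

theorem lsMul_compatible_with_bracket (n : ℕ) (x y : Matrix (Fin n) (Fin n) ℚ)
    (hx : StrictlyUpperTriangular x) (hy : StrictlyUpperTriangular y) :
    lsMul x y - lsMul y x = x * y - y * x := by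
  have key : lsMul x y - lsMul y x
      = ∑ i ∈ Finset.Icc 1 (n - 1), ∑ j ∈ Finset.Icc 1 (n - 1),
        (superdiag x i * superdiag y j - superdiag y j * superdiag x i) := by
    unfold lsMul
    rw [Finset.sum_comm (f := fun (i j : ℕ) => ((j : ℚ) / ((i : ℚ) + (j : ℚ))) •
      (superdiag y i * superdiag x j - superdiag x j * superdiag y i))]
    rw [← Finset.sum_sub_distrib]
    refine Finset.sum_congr rfl fun i hi => ?_
    rw [← Finset.sum_sub_distrib]
    refine Finset.sum_congr rfl fun j hj => ?_
    have hi1 : 1 ≤ i := (Finset.mem_Icc.mp hi).1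
    have hj1 : 1 ≤ j := (Finset.mem_Icc.mp hj).1
    have h1 : (i : ℚ) + (j : ℚ) ≠ 0 := by
      have : (0 : ℕ) < i + j := by omega
      exact_mod_cast this.ne'
    have h2 : (j : ℚ) + (i : ℚ) ≠ 0 := by rw [add_comm]; exact h1
    have hc : (j : ℚ) / ((i : ℚ) + j) + (i : ℚ) / ((j : ℚ) + i) = 1 := by
      field_simp
      ring
    rw [← neg_sub (superdiag x i * superdiag y j) (superdiag y j * superdiag x i),
      smul_neg, sub_neg_eq_add, ← add_smul, hc, one_smul]
  rw [key]
  simp only [Finset.sum_sub_distrib]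
  rw [← Finset.sum_mul_sum, Finset.sum_comm (f := fun (i j : ℕ) =>
    superdiag y j * superdiag x i), ← Finset.sum_mul_sum,
    sum_superdiag x hx, sum_superdiag y hy]
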